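/- Let n = p₁^{a₁}·p₂^{a₂}···p_k^{a_k} be a primitive non-deficient number, where p₁ < p₂ < ··· < p_k are primes and each aᵢ ≥ 1, and let R = p₁·p₂···p_k be the radical of n. Then there exists an index i with 1 ≤ i ≤ k such that pᵢ^{aᵢ+1} < 2·k·R. -/

import Mathlib

/-- The sum of the positive divisors of `n`. -/
def sigma1 (n : ℕ) : ℕ := ∑ d ∈ n.divisors, d

lemma sigma1_eq_prod {n : ℕ} (hn : n ≠ 0) :
    sigma1 n = ∏ p ∈ n.primeFactors, ∑ i ∈ Finset.range (n.factorization p + 1), p ^ i :=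
  Nat.sum_divisors hn

lemma sigma1_prime_pow {q : ℕ} (hq : q.Prime) (c : ℕ) :
    sigma1 (q ^ c) = ∑ i ∈ Finset.range (c + 1), q ^ i := by
  unfold sigma1
  rw [← ArithmeticFunction.sigma_one_apply, ArithmeticFunction.sigma_one_apply_prime_pow hq]

lemma sigma1_mul {x y : ℕ} (h : Nat.Coprime x y) :
    sigma1 (x * y) = sigma1 x * sigma1 y := by
  unfold sigma1; exact h.sum_divisors_mul

lemma geom_nat (x : ℕ) (hx : 1 ≤ x) (c : ℕ) :
    (x - 1) * (∑ i ∈ Finset.range c, x ^ i) + 1 = x ^ c := by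
  obtain ⟨y, rfl⟩ : ∃ y, x = y + 1 := ⟨x - 1, by omega⟩
  simp only [Nat.add_sub_cancel]
  induction c with
  | zero => simp
  | succ c ih =>
    rw [Finset.sum_range_succ, Nat.mul_add, pow_succ, ← ih]
    ring

lemma nat_prod_eq_self {n : ℕ} (hn : n ≠ 0) :
    (∏ p ∈ n.primeFactors, p ^ n.factorization p) = n := by
  conv_rhs => rw [← Nat.factorization_prod_pow_eq_self hn]
  rw [Finsupp.prod, Nat.support_factorization]

lemma weier (s : Finset ℕ) (g : ℕ → ℚ) (h0 : ∀ i ∈ s, 0 ≤ g i) (h1 : ∀ i ∈ s, g i ≤ 1) :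
    1 - ∑ i ∈ s, g i ≤ ∏ i ∈ s, (1 - g i) := by
  classical
  induction s using Finset.induction_on with
  | empty => simp
  | @insert x t hxs ih =>
    have h0x : 0 ≤ g x := h0 x (Finset.mem_insert_self x t)
    have h1x : g x ≤ 1 := h1 x (Finset.mem_insert_self x t)
    have h0' : ∀ i ∈ t, 0 ≤ g i := fun i hi => h0 i (Finset.mem_insert_of_mem hi)
    have h1' : ∀ i ∈ t, g i ≤ 1 := fun i hi => h1 i (Finset.mem_insert_of_mem hi)
    have ih' := ih h0' h1'
    have hle1 : ∏ i ∈ t, (1 - g i) ≤ 1 :=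
      Finset.prod_le_one (fun i hi => by linarith [h1' i hi]) (fun i hi => by linarith [h0' i hi])
    rw [Finset.sum_insert hxs, Finset.prod_insert hxs]
    nlinarith [mul_le_mul_of_nonneg_left hle1 h0x]

lemma minProd (q : ℕ) (hq : 1 ≤ q) :
    ∀ S : Finset ℕ, (∀ p ∈ S, q ≤ p) →
      (q - 1) * ∏ p ∈ S, p ≤ (q - 1 + S.card) * ∏ p ∈ S, (p - 1) := by
  intro S
  induction S using Finset.induction_on_max with
  | empty => simp
  | insert M S' hlt ih =>
    intro hS
    have hMS : M ∉ S' := fun h => lt_irrefl M (hlt M h)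
    have hq' : ∀ p ∈ S', q ≤ p := fun p hp => hS p (Finset.mem_insert_of_mem hp)
    have hqM : q ≤ M := hS M (Finset.mem_insert_self M S')
    have hcard : q + S'.card ≤ M := by
      have hsub : insert M S' ⊆ Finset.Icc q M := by
        intro x hx
        rcases Finset.mem_insert.mp hx with rfl | hx'
        · exact Finset.mem_Icc.mpr ⟨hqM, le_rfl⟩
        · exact Finset.mem_Icc.mpr ⟨hq' x hx', (hlt x hx').le⟩
      have h1 := Finset.card_le_card hsub
      rw [Nat.card_Icc, Finset.card_insert_of_notMem hMS] at h1
      omega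
    have ih' := ih hq'
    rw [Finset.prod_insert hMS, Finset.prod_insert hMS, Finset.card_insert_of_notMem hMS]
    obtain ⟨q', rfl⟩ : ∃ q', q = q' + 1 := ⟨q - 1, by omega⟩
    simp only [Nat.add_sub_cancel] at ih' ⊢
    calc q' * (M * ∏ p ∈ S', p) = M * (q' * ∏ p ∈ S', p) := by ring
      _ ≤ M * ((q' + S'.card) * ∏ p ∈ S', (p - 1)) := Nat.mul_le_mul_left M ih'
      _ = (M * (q' + S'.card)) * ∏ p ∈ S', (p - 1) := by ring
      _ ≤ ((q' + (S'.card + 1)) * (M - 1)) * ∏ p ∈ S', (p - 1) := by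
          apply Nat.mul_le_mul_right
          obtain ⟨M', rfl⟩ : ∃ M', M = M' + 1 := ⟨M - 1, by omega⟩
          simp only [Nat.add_sub_cancel]
          nlinarith [hcard]
      _ = (q' + (S'.card + 1)) * ((M - 1) * ∏ p ∈ S', (p - 1)) := by ring


set_option maxHeartbeats 1000000 in
theorem exists_prime_power_lt_two_k_R (n : ℕ) (hn : 0 < n)
    (hnondef : 2 * n ≤ sigma1 n)
    (hprim : ∀ d : ℕ, d ∣ n → d < n → sigma1 d < 2 * d)
    (k : ℕ) (hk : k = n.primeFactors.card)
    (R : ℕ) (hR : R = ∏ p ∈ n.primeFactors, p) :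
    ∃ p ∈ n.primeFactors, p ^ (n.factorization p + 1) < 2 * k * R := by
  have hn2 : 2 ≤ n := by
    rcases Nat.lt_or_ge n 2 with h | h
    · interval_cases n
      simp [sigma1] at hnondef
    · exact h
  have hn0 : n ≠ 0 := by omega
  have hP : n.primeFactors.Nonempty := Nat.nonempty_primeFactors.mpr (by omega)
  have hprime : ∀ p ∈ n.primeFactors, p.Prime := fun p hp => Nat.prime_of_mem_primeFactors hp
  have htwo : ∀ p ∈ n.primeFactors, 2 ≤ p := fun p hp => (hprime p hp).two_le
  by_contra hcon
  push_neg at hcon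
  -- hcon : ∀ p ∈ n.primeFactors, 2 * k * R ≤ p ^ (n.factorization p + 1)
  set φ : ℕ := ∏ p ∈ n.primeFactors, (p - 1) with hφ
  have hφ1 : 1 ≤ φ := Finset.one_le_prod' fun p hp => by have := htwo p hp; omega
  have hk1 : 1 ≤ k := by rw [hk]; exact Finset.card_pos.mpr hP
  have hR1 : 1 ≤ R := by
    rw [hR]; exact Finset.one_le_prod' fun p hp => by have := htwo p hp; omega
  -- ℚ identities
  have hsig : sigma1 n = ∏ p ∈ n.primeFactors, ∑ i ∈ Finset.range (n.factorization p + 1), p ^ i :=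
    Nat.sum_divisors hn0
  have hprod_n : (∏ p ∈ n.primeFactors, p ^ n.factorization p) = n := by
    conv_rhs => rw [← Nat.factorization_prod_pow_eq_self hn0]
    rw [Finsupp.prod, Nat.support_factorization]
  have hφQ : (φ : ℚ) = ∏ p ∈ n.primeFactors, ((p : ℚ) - 1) := by
    rw [hφ]
    push_cast [Nat.cast_prod]
    refine Finset.prod_congr rfl fun p hp => ?_
    have := htwo p hp
    rw [Nat.cast_sub (by omega)]
    norm_num
  have hsigQ : ((sigma1 n : ℚ)) = ∏ p ∈ n.primeFactors, ∑ i ∈ Finset.range (n.factorization p + 1), (p : ℚ) ^ i := by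
    rw [hsig]; push_cast; rfl
  have hfact : ∀ p ∈ n.primeFactors,
      ((p : ℚ) - 1) * (∑ i ∈ Finset.range (n.factorization p + 1), (p : ℚ) ^ i)
        = (p : ℚ) ^ (n.factorization p + 1) - 1 := fun p _ => mul_geom_sum _ _
  have hφσ : (φ : ℚ) * (sigma1 n : ℚ) = ∏ p ∈ n.primeFactors, ((p : ℚ) ^ (n.factorization p + 1) - 1) := by
    rw [hφQ, hsigQ, ← Finset.prod_mul_distrib]
    exact Finset.prod_congr rfl hfact
  have hnRQ : (n : ℚ) * (R : ℚ) = ∏ p ∈ n.primeFactors, (p : ℚ) ^ (n.factorization p + 1) := by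
    have h1 : (n : ℚ) = ∏ p ∈ n.primeFactors, (p : ℚ) ^ n.factorization p := by
      exact_mod_cast hprod_n.symm
    have h2 : (R : ℚ) = ∏ p ∈ n.primeFactors, (p : ℚ) := by
      rw [hR]; push_cast; rfl
    rw [h1, h2, ← Finset.prod_mul_distrib]
    exact Finset.prod_congr rfl fun p _ => (pow_succ _ _).symm
  -- step 3 : 2φ + 1 ≤ R
  have hppow2 : ∀ p ∈ n.primeFactors, (2 : ℚ) ≤ (p : ℚ) ^ (n.factorization p + 1) := by
    intro p hp
    have h2p : (2 : ℚ) ≤ (p : ℚ) := by exact_mod_cast htwo p hp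
    calc (2:ℚ) ≤ (p:ℚ) := h2p
      _ ≤ (p:ℚ) ^ (n.factorization p + 1) := le_self_pow₀ (by linarith) (by omega)
  have hElt : (φ : ℚ) * (sigma1 n : ℚ) < (n : ℚ) * R := by
    rw [hφσ, hnRQ]
    refine Finset.prod_lt_prod_of_nonempty (fun p hp => ?_) (fun p hp => ?_) hP
    · have := hppow2 p hp; linarith
    · linarith [hppow2 p hp]
  have hstep3 : 2 * φ + 1 ≤ R := by
    have h2n : (2 : ℚ) * n ≤ (sigma1 n : ℚ) := by exact_mod_cast hnondef
    have hφpos : (0 : ℚ) < φ := by exact_mod_cast hφ1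
    have hnpos : (0 : ℚ) < n := by exact_mod_cast hn
    have : (2 : ℚ) * φ * n < R * n := by nlinarith
    have h2 : (2 : ℚ) * φ < R := lt_of_mul_lt_mul_right this hnpos.le
    exact_mod_cast h2
  -- step 2 : 2Rn ≤ 2φσ + n
  have hkR0 : (0 : ℚ) < 2 * (k : ℚ) * R := by
    have : (1:ℚ) ≤ k := by exact_mod_cast hk1
    have : (1:ℚ) ≤ R := by exact_mod_cast hR1
    positivity
  have hgle : ∀ p ∈ n.primeFactors, ((p : ℚ) ^ (n.factorization p + 1))⁻¹ ≤ (2 * (k:ℚ) * R)⁻¹ := by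
    intro p hp
    have hc : (2 * (k:ℚ) * R) ≤ (p : ℚ) ^ (n.factorization p + 1) := by
      exact_mod_cast hcon p hp
    exact inv_anti₀ hkR0 hc
  have hsum : ∑ p ∈ n.primeFactors, ((p : ℚ) ^ (n.factorization p + 1))⁻¹ ≤ (2 * (R:ℚ))⁻¹ := by
    calc ∑ p ∈ n.primeFactors, ((p : ℚ) ^ (n.factorization p + 1))⁻¹
        ≤ n.primeFactors.card • (2 * (k:ℚ) * R)⁻¹ := Finset.sum_le_card_nsmul _ _ _ hgle
      _ = (k : ℚ) * (2 * (k:ℚ) * R)⁻¹ := by rw [← hk, nsmul_eq_mul]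
      _ = (2 * (R:ℚ))⁻¹ := by
          have hkne : (k : ℚ) ≠ 0 := Nat.cast_ne_zero.mpr (by omega)
          have hRne : (R : ℚ) ≠ 0 := Nat.cast_ne_zero.mpr (by omega)
          field_simp
  -- Weierstrass bound
  have hwei : 1 - (2 * (R:ℚ))⁻¹ ≤ ∏ p ∈ n.primeFactors, (1 - ((p:ℚ) ^ (n.factorization p + 1))⁻¹) := by
    have h := weier n.primeFactors (fun p => ((p:ℚ) ^ (n.factorization p + 1))⁻¹)
      (fun p hp => by positivity)
      (fun p hp => by
        have h2 := hppow2 p hp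
        have h1 : (1:ℚ) ≤ (p:ℚ) ^ (n.factorization p + 1) := by linarith
        simpa using inv_anti₀ one_pos h1)
    linarith [hsum]
  have hprodsplit : ∏ p ∈ n.primeFactors, ((p:ℚ) ^ (n.factorization p + 1) - 1)
      = (∏ p ∈ n.primeFactors, (1 - ((p:ℚ) ^ (n.factorization p + 1))⁻¹)) * ((n:ℚ) * R) := by
    rw [hnRQ, ← Finset.prod_mul_distrib]
    refine Finset.prod_congr rfl fun p hp => ?_
    have h0 : ((p:ℚ) ^ (n.factorization p + 1)) ≠ 0 := by
      have := htwo p hp; positivity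
    rw [sub_mul, one_mul, inv_mul_cancel₀ h0]
  have hKey1 : 2*R*n ≤ 2*φ*sigma1 n + n := by
    have hnR0 : (0:ℚ) ≤ (n:ℚ)*R := by positivity
    have h3 : (1 - (2*(R:ℚ))⁻¹) * ((n:ℚ)*R) ≤ (φ:ℚ)*(sigma1 n) := by
      rw [hφσ, hprodsplit]
      exact mul_le_mul_of_nonneg_right hwei hnR0
    have hRne : (R:ℚ) ≠ 0 := Nat.cast_ne_zero.mpr (by omega)
    have hexp : (1 - (2*(R:ℚ))⁻¹) * ((n:ℚ)*R) = (n:ℚ)*R - n/2 := by field_simp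
    have hQ : 2*(R:ℚ)*n ≤ 2*(φ:ℚ)*(sigma1 n) + n := by linarith
    exact_mod_cast hQ
  -- step 4 : minimal prime q satisfies q ≤ k
  obtain ⟨q, hqP, hqmin⟩ : ∃ q ∈ n.primeFactors, ∀ p ∈ n.primeFactors, q ≤ p :=
    ⟨n.primeFactors.min' hP, Finset.min'_mem _ _, fun p hp => Finset.min'_le _ p hp⟩
  have hq2 : 2 ≤ q := htwo q hqP
  have hsorted := minProd q (by omega) n.primeFactors hqmin
  rw [← hR, ← hφ, ← hk] at hsorted
  have hqk : q ≤ k := by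
    by_contra hqk
    push_neg at hqk
    have h1 : (q-1)*(2*φ+1) ≤ (q-1+k)*φ :=
      le_trans (Nat.mul_le_mul_left _ hstep3) hsorted
    have h2 : k*φ ≤ (q-1)*φ := Nat.mul_le_mul_right φ (show k ≤ q - 1 by omega)
    obtain ⟨q', hq'⟩ : ∃ q', q = q' + 2 := ⟨q - 2, by omega⟩
    rw [hq'] at h1 h2
    simp only [Nat.add_sub_cancel, show q' + 2 - 1 = q' + 1 from by omega] at h1 h2
    nlinarith [h1, h2, hφ1]
  -- step 5 : the deficient divisor n / q
  have hqprime : q.Prime := hprime q hqP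
  have haq : 0 < n.factorization q :=
    hqprime.factorization_pos_of_dvd hn0 (Nat.dvd_of_mem_primeFactors hqP)
  obtain ⟨b, hb⟩ : ∃ b, n.factorization q = b + 1 := ⟨n.factorization q - 1, by omega⟩
  have hm0 : 0 < (n / q ^ n.factorization q) := Nat.ordCompl_pos q hn0
  have hnm : q ^ n.factorization q * ((n / q ^ n.factorization q)) = n := Nat.ordProj_mul_ordCompl_eq_self n q
  have hcop : Nat.Coprime q ((n / q ^ n.factorization q)) := Nat.coprime_ordCompl hqprime hn0
  set m := (n / q ^ n.factorization q) with hmdef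
  rw [hb] at hnm
  have f4 : sigma1 n = sigma1 (q ^ (b+1)) * sigma1 m := by
    rw [← hnm]; exact sigma1_mul (Nat.Coprime.pow_left _ hcop)
  have hd_dvd : q^b * m ∣ n := ⟨q, by rw [← hnm]; ring⟩
  have hd_lt : q^b * m < n := by
    have he : q^b*m*q = n := by rw [← hnm]; ring
    nlinarith [pow_pos (show 0 < q from by omega) b, hm0]
  have f5 : sigma1 (q^b) * sigma1 m < 2*(q^b*m) := by
    rw [← sigma1_mul (Nat.Coprime.pow_left _ hcop)]
    exact hprim _ hd_dvd hd_lt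
  have f1 : (q-1) * sigma1 (q^(b+1)) + 1 = q^(b+2) := by
    rw [sigma1_prime_pow hqprime, geom_nat q (by omega)]
  have f2 : (q-1) * sigma1 (q^b) + 1 = q^(b+1) := by
    rw [sigma1_prime_pow hqprime, geom_nat q (by omega)]
  have f6 : 2*R*(q^(b+1)*m) ≤ 2*φ*(sigma1 (q^(b+1)) * sigma1 m) + q^(b+1)*m := by
    have h := hKey1
    rw [f4] at h
    rw [← hnm] at h
    exact h
  have f7 : 2*k*R ≤ q^(b+2) := by
    have := hcon q hqP
    rwa [hb] at this
  -- cast to ℤ and finish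
  have hq1 : 1 ≤ q := by omega
  zify [hq1] at f1 f2
  zify at f5 f6 f7 hqk hstep3 hq2 hφ1 hk1 hm0
  have hXpos : (0:ℤ) < (q:ℤ)^(b+2) := by positivity
  have ha : (0:ℤ) ≤ (2*(R:ℤ) - 2 - 4*(φ:ℤ)) * (q:ℤ)^(b+2) :=
    mul_nonneg (by linarith) hXpos.le
  have hbb : (0:ℤ) ≤ (2*(R:ℤ) - 1) * ((k:ℤ) - (q:ℤ)) :=
    mul_nonneg (by linarith) (by linarith)
  have hdag : 4*(φ:ℤ)*((q:ℤ)^(b+2) - 1) ≤ (2*(R:ℤ)-1)*((q:ℤ)^(b+2) - (q:ℤ)) := by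
    nlinarith [ha, hbb, f7, hk1, hφ1]
  have e1 : ((q:ℤ)-1)*(4*(φ:ℤ)*(sigma1 (q^(b+1)):ℤ)) = 4*(φ:ℤ)*((q:ℤ)^(b+2)-1) := by
    linear_combination (4*(φ:ℤ))*f1
  have e2 : ((q:ℤ)-1)*((2*(R:ℤ)-1)*((q:ℤ)*(sigma1 (q^b):ℤ))) = (2*(R:ℤ)-1)*((q:ℤ)^(b+2)-(q:ℤ)) := by
    linear_combination ((2*(R:ℤ)-1)*(q:ℤ))*f2
  have h2 : 4*(φ:ℤ)*(sigma1 (q^(b+1)):ℤ) ≤ (2*(R:ℤ)-1)*((q:ℤ)*(sigma1 (q^b):ℤ)) := by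
    have hd := hdag
    rw [← e1, ← e2] at hd
    exact le_of_mul_le_mul_left hd (by linarith)
  have hS0 : (0:ℤ) ≤ (sigma1 m : ℤ) := by positivity
  have hG1 : 4*(φ:ℤ)*(sigma1 (q^(b+1)):ℤ)*(sigma1 m:ℤ)
      ≤ (2*(R:ℤ)-1)*((q:ℤ)*(sigma1 (q^b):ℤ))*(sigma1 m:ℤ) :=
    mul_le_mul_of_nonneg_right h2 hS0
  have hpos : (0:ℤ) < (2*(R:ℤ)-1)*(q:ℤ) := mul_pos (by linarith) (by linarith)
  have hG3 : (2*(R:ℤ)-1)*(q:ℤ)*((sigma1 (q^b):ℤ)*(sigma1 m:ℤ))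
      < (2*(R:ℤ)-1)*(q:ℤ)*(2*((q:ℤ)^b*(m:ℤ))) := by
    apply mul_lt_mul_of_pos_left _ hpos
    exact_mod_cast f5
  have e3 : (2*(R:ℤ)-1)*(q:ℤ)*(2*((q:ℤ)^b*(m:ℤ))) = 2*((2*(R:ℤ)-1)*((q:ℤ)^(b+1)*(m:ℤ))) := by
    ring
  have c2 : 2*((2*(R:ℤ)-1)*((q:ℤ)^(b+1)*(m:ℤ))) ≤ 4*(φ:ℤ)*(sigma1 (q^(b+1)):ℤ)*(sigma1 m:ℤ) := by
    linarith [f6]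
  have c3 : 4*(φ:ℤ)*(sigma1 (q^(b+1)):ℤ)*(sigma1 m:ℤ)
      ≤ (2*(R:ℤ)-1)*(q:ℤ)*((sigma1 (q^b):ℤ)*(sigma1 m:ℤ)) := by linarith [hG1]
  linarith [c2, c3, hG3, e3]
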